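/- For every α ∈ [1,2] there exists an infinite-dimensional real Banach space X such that T(X) = α, t(X) = 1, and T(X*) = 2, where X* denotes the topological dual of X. -/

import Mathlib

open Filter Topology

/-- The thinness index `t(X)` of a normed space. -/
noncomputable def thinness (X : Type*) [NormedAddCommGroup X] : ℝ :=
  sInf {r : ℝ | 0 < r ∧ ∀ (n : ℕ) (x : Fin n → X), (∀ i, ‖x i‖ = 1) →
    ∀ ε : ℝ, 0 < ε → ∃ y : X, ‖y‖ = 1 ∧ ∀ i, ‖x i - y‖ < r + ε}

/-- The thickness index `T(X)` of a normed space. -/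
noncomputable def thickness (X : Type*) [NormedAddCommGroup X] : ℝ :=
  sInf {r : ℝ | 0 < r ∧ ∃ (n : ℕ) (x : Fin n → X), (∀ i, ‖x i‖ = 1) ∧
    Metric.closedBall (0 : X) 1 ⊆ ⋃ i, Metric.closedBall (x i) r}


noncomputable section

namespace TT

/-! ### Row seminorms -/

def mRow (v : ℕ → ℝ) : ℝ := ⨆ k, |v k|

def sRow (θ : ℝ) (v : ℕ → ℝ) : ℝ := ∑' k, θ * |v k|

def rRow (θ : ℝ) (v : ℕ → ℝ) : ℝ := max (mRow v) (sRow θ v)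

lemma mRow_nonneg (v : ℕ → ℝ) : 0 ≤ mRow v :=
  Real.iSup_nonneg fun k => abs_nonneg _

lemma sRow_nonneg {θ : ℝ} (hθ : 0 ≤ θ) (v : ℕ → ℝ) : 0 ≤ sRow θ v :=
  tsum_nonneg fun k => mul_nonneg hθ (abs_nonneg _)

lemma rRow_nonneg {θ : ℝ} (v : ℕ → ℝ) : 0 ≤ rRow θ v :=
  le_trans (mRow_nonneg v) (le_max_left _ _)

lemma mRow_le {v : ℕ → ℝ} {a : ℝ} (h : ∀ k, |v k| ≤ a) : mRow v ≤ a :=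
  ciSup_le h

lemma abs_le_mRow {v : ℕ → ℝ} (hb : BddAbove (Set.range fun k => |v k|)) (k : ℕ) :
    |v k| ≤ mRow v :=
  le_ciSup hb k

lemma mRow_le_of_rRow_le {θ : ℝ} {v : ℕ → ℝ} {a : ℝ} (h : rRow θ v ≤ a) : mRow v ≤ a :=
  le_trans (le_max_left _ _) h

lemma sRow_le_of_rRow_le {θ : ℝ} {v : ℕ → ℝ} {a : ℝ} (h : rRow θ v ≤ a) : sRow θ v ≤ a :=
  le_trans (le_max_right _ _) h

lemma rRow_le {θ : ℝ} {v : ℕ → ℝ} {a : ℝ} (h1 : mRow v ≤ a) (h2 : sRow θ v ≤ a) :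
    rRow θ v ≤ a := max_le h1 h2

lemma mRow_congr {v w : ℕ → ℝ} (h : ∀ k, v k = w k) : mRow v = mRow w := by
  unfold mRow; congr 1; funext k; rw [h]

lemma sRow_congr {θ : ℝ} {v w : ℕ → ℝ} (h : ∀ k, v k = w k) : sRow θ v = sRow θ w := by
  unfold sRow; congr 1; funext k; rw [h]

lemma rRow_congr {θ : ℝ} {v w : ℕ → ℝ} (h : ∀ k, v k = w k) : rRow θ v = rRow θ w := by
  unfold rRow; rw [mRow_congr h, sRow_congr h]

lemma bddAbove_add {v w : ℕ → ℝ} (hv : BddAbove (Set.range fun k => |v k|))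
    (hw : BddAbove (Set.range fun k => |w k|)) :
    BddAbove (Set.range fun k => |v k + w k|) := by
  obtain ⟨a, ha⟩ := hv
  obtain ⟨b, hb⟩ := hw
  refine ⟨a + b, ?_⟩
  rintro r ⟨k, rfl⟩
  exact le_trans (abs_add_le _ _)
    (add_le_add (ha ⟨k, rfl⟩) (hb ⟨k, rfl⟩))

lemma summable_add {θ : ℝ} (hθ : 0 ≤ θ) {v w : ℕ → ℝ}
    (hv : Summable fun k => θ * |v k|) (hw : Summable fun k => θ * |w k|) :
    Summable fun k => θ * |v k + w k| := by
  refine Summable.of_nonneg_of_le (fun k => mul_nonneg hθ (abs_nonneg _))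
    (fun k => ?_) (hv.add hw)
  calc θ * |v k + w k| ≤ θ * (|v k| + |w k|) := by
        exact mul_le_mul_of_nonneg_left (abs_add_le _ _) hθ
    _ = θ * |v k| + θ * |w k| := by ring

lemma mRow_add_le {v w : ℕ → ℝ} (hv : BddAbove (Set.range fun k => |v k|))
    (hw : BddAbove (Set.range fun k => |w k|)) :
    mRow (fun k => v k + w k) ≤ mRow v + mRow w := by
  refine mRow_le fun k => le_trans (abs_add_le _ _) (add_le_add ?_ ?_)
  · exact abs_le_mRow hv k
  · exact abs_le_mRow hw k

lemma sRow_add_le {θ : ℝ} (hθ : 0 ≤ θ) {v w : ℕ → ℝ}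
    (hv : Summable fun k => θ * |v k|) (hw : Summable fun k => θ * |w k|) :
    sRow θ (fun k => v k + w k) ≤ sRow θ v + sRow θ w := by
  unfold sRow
  rw [← Summable.tsum_add hv hw]
  refine Summable.tsum_le_tsum (fun k => ?_) (summable_add hθ hv hw) (hv.add hw)
  calc θ * |v k + w k| ≤ θ * (|v k| + |w k|) :=
        mul_le_mul_of_nonneg_left (abs_add_le _ _) hθ
    _ = θ * |v k| + θ * |w k| := by ring

lemma rRow_add_le {θ : ℝ} (hθ : 0 ≤ θ) {v w : ℕ → ℝ}
    (hv : BddAbove (Set.range fun k => |v k|)) (hw : BddAbove (Set.range fun k => |w k|))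
    (hv' : Summable fun k => θ * |v k|) (hw' : Summable fun k => θ * |w k|) :
    rRow θ (fun k => v k + w k) ≤ rRow θ v + rRow θ w := by
  refine rRow_le ?_ ?_
  · exact le_trans (mRow_add_le hv hw)
      (add_le_add (le_max_left _ _) (le_max_left _ _))
  · exact le_trans (sRow_add_le hθ hv' hw')
      (add_le_add (le_max_right _ _) (le_max_right _ _))

lemma mRow_smul_le {c : ℝ} {v : ℕ → ℝ} (hv : BddAbove (Set.range fun k => |v k|)) :
    mRow (fun k => c * v k) ≤ |c| * mRow v := by
  refine mRow_le fun k => ?_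
  rw [abs_mul]
  exact mul_le_mul_of_nonneg_left (abs_le_mRow hv k) (abs_nonneg c)

lemma sRow_smul {θ : ℝ} (c : ℝ) (v : ℕ → ℝ) :
    sRow θ (fun k => c * v k) = |c| * sRow θ v := by
  unfold sRow
  rw [← tsum_mul_left]
  congr 1; funext k; rw [abs_mul]; ring

lemma summable_smul {θ : ℝ} {c : ℝ} {v : ℕ → ℝ}
    (hv : Summable fun k => θ * |v k|) : Summable fun k => θ * |c * v k| := by
  have : (fun k => θ * |c * v k|) = fun k => |c| * (θ * |v k|) := by
    funext k; rw [abs_mul]; ring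
  rw [this]
  exact hv.mul_left _

lemma bddAbove_smul {c : ℝ} {v : ℕ → ℝ} (hv : BddAbove (Set.range fun k => |v k|)) :
    BddAbove (Set.range fun k => |c * v k|) := by
  obtain ⟨a, ha⟩ := hv
  refine ⟨|c| * a, ?_⟩
  rintro r ⟨k, rfl⟩
  show |c * v k| ≤ _
  rw [abs_mul]
  exact mul_le_mul_of_nonneg_left (ha ⟨k, rfl⟩) (abs_nonneg c)

lemma rRow_smul_le {θ : ℝ} (hθ : 0 ≤ θ) {c : ℝ} {v : ℕ → ℝ}
    (hv : BddAbove (Set.range fun k => |v k|)) :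
    rRow θ (fun k => c * v k) ≤ |c| * rRow θ v := by
  refine rRow_le ?_ ?_
  · exact le_trans (mRow_smul_le hv)
      (mul_le_mul_of_nonneg_left (le_max_left _ _) (abs_nonneg c))
  · rw [sRow_smul]
    exact mul_le_mul_of_nonneg_left (le_max_right _ _) (abs_nonneg c)

lemma mRow_zero : mRow (fun _ => (0:ℝ)) = 0 := by
  unfold mRow; simp

lemma sRow_zero {θ : ℝ} : sRow θ (fun _ => (0:ℝ)) = 0 := by
  unfold sRow; simp

lemma rRow_zero {θ : ℝ} : rRow θ (fun _ => (0:ℝ)) = 0 := by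
  unfold rRow; rw [mRow_zero, sRow_zero]; simp

lemma mRow_neg (v : ℕ → ℝ) : mRow (fun k => -v k) = mRow v := by
  unfold mRow; congr 1; funext k; rw [abs_neg]

lemma sRow_neg {θ : ℝ} (v : ℕ → ℝ) : sRow θ (fun k => -v k) = sRow θ v := by
  unfold sRow; congr 1; funext k; rw [abs_neg]

lemma rRow_neg {θ : ℝ} (v : ℕ → ℝ) : rRow θ (fun k => -v k) = rRow θ v := by
  unfold rRow; rw [mRow_neg, sRow_neg]

/-! ### The space -/

def MemX (θ : ℝ) (x : ℕ → ℕ → ℝ) : Prop :=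
  (∀ n, BddAbove (Set.range fun k => |x n k|)) ∧
  (∀ n, Summable fun k => θ * |x n k|) ∧
  Tendsto (fun n => rRow θ (x n)) atTop (𝓝 0)

lemma MemX.zero {θ : ℝ} : MemX θ (fun _ _ => 0) := by
  refine ⟨fun n => ⟨0, by rintro r ⟨k, rfl⟩; simp⟩, fun n => by simpa using summable_zero, ?_⟩
  have : (fun n : ℕ => rRow θ (fun _ => (0:ℝ))) = fun _ => 0 := by
    funext n; exact rRow_zero
  simpa [this] using tendsto_const_nhds

lemma MemX.add {θ : ℝ} (hθ : 0 ≤ θ) {x y : ℕ → ℕ → ℝ} (hx : MemX θ x) (hy : MemX θ y) :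
    MemX θ (fun n k => x n k + y n k) := by
  refine ⟨fun n => bddAbove_add (hx.1 n) (hy.1 n),
    fun n => summable_add hθ (hx.2.1 n) (hy.2.1 n), ?_⟩
  refine squeeze_zero (fun n => rRow_nonneg _) (fun n =>
    rRow_add_le hθ (hx.1 n) (hy.1 n) (hx.2.1 n) (hy.2.1 n)) ?_
  simpa using hx.2.2.add hy.2.2

lemma MemX.smul {θ : ℝ} (hθ : 0 ≤ θ) {x : ℕ → ℕ → ℝ} (c : ℝ) (hx : MemX θ x) :
    MemX θ (fun n k => c * x n k) := by
  refine ⟨fun n => bddAbove_smul (hx.1 n), fun n => summable_smul (hx.2.1 n), ?_⟩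
  refine squeeze_zero (fun n => rRow_nonneg _) (fun n => rRow_smul_le hθ (hx.1 n)) ?_
  simpa using hx.2.2.const_mul |c|

structure Xsp (θ : ℝ) (hθ : 0 ≤ θ) where
  val : ℕ → ℕ → ℝ
  mem : MemX θ val

namespace Xsp

variable {θ : ℝ} {hθ : 0 ≤ θ}

@[ext] lemma ext {x y : Xsp θ hθ} (h : ∀ n k, x.val n k = y.val n k) : x = y := by
  cases x; cases y
  simp only [mk.injEq]
  funext n k; exact h n k

instance : Zero (Xsp θ hθ) := ⟨⟨fun _ _ => 0, MemX.zero⟩⟩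
instance : Add (Xsp θ hθ) :=
  ⟨fun x y => ⟨fun n k => x.val n k + y.val n k, MemX.add hθ x.mem y.mem⟩⟩
instance : Neg (Xsp θ hθ) :=
  ⟨fun x => ⟨fun n k => -x.val n k, by
    have := MemX.smul hθ (-1) x.mem
    simpa using this⟩⟩
instance : SMul ℝ (Xsp θ hθ) :=
  ⟨fun c x => ⟨fun n k => c * x.val n k, MemX.smul hθ c x.mem⟩⟩

@[simp] lemma zero_val (n k : ℕ) : (0 : Xsp θ hθ).val n k = 0 := rfl
@[simp] lemma add_val (x y : Xsp θ hθ) (n k : ℕ) :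
    (x + y).val n k = x.val n k + y.val n k := rfl
@[simp] lemma neg_val (x : Xsp θ hθ) (n k : ℕ) : (-x).val n k = -x.val n k := rfl
@[simp] lemma smul_val (c : ℝ) (x : Xsp θ hθ) (n k : ℕ) :
    (c • x).val n k = c * x.val n k := rfl

instance : AddCommGroup (Xsp θ hθ) where
  add_assoc a b c := by ext n k; simp [add_assoc]
  zero_add a := by ext n k; simp
  add_zero a := by ext n k; simp
  add_comm a b := by ext n k; simp [add_comm]
  neg_add_cancel a := by ext n k; simp
  nsmul := nsmulRec
  zsmul := zsmulRec

@[simp] lemma sub_val (x y : Xsp θ hθ) (n k : ℕ) :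
    (x - y).val n k = x.val n k - y.val n k := by
  show (x + -y).val n k = _
  simp [sub_eq_add_neg]

instance : Module ℝ (Xsp θ hθ) where
  one_smul x := by ext n k; simp
  mul_smul a b x := by ext n k; simp [mul_assoc]
  smul_zero a := by ext n k; simp
  smul_add a x y := by ext n k; simp [mul_add]
  add_smul a b x := by ext n k; simp [add_mul]
  zero_smul x := by ext n k; simp

end Xsp


/-! ### The norm -/

namespace Xsp

variable {θ : ℝ} {hθ : 0 ≤ θ}

def nX (x : Xsp θ hθ) : ℝ := ⨆ n, rRow θ (x.val n)

lemma bddAbove_rRow (x : Xsp θ hθ) : BddAbove (Set.range fun n => rRow θ (x.val n)) :=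
  x.mem.2.2.bddAbove_range

lemma rRow_le_nX (x : Xsp θ hθ) (n : ℕ) : rRow θ (x.val n) ≤ nX x :=
  le_ciSup (bddAbove_rRow x) n

lemma nX_le {x : Xsp θ hθ} {a : ℝ} (h : ∀ n, rRow θ (x.val n) ≤ a) : nX x ≤ a :=
  ciSup_le h

lemma nX_nonneg (x : Xsp θ hθ) : 0 ≤ nX x :=
  Real.iSup_nonneg fun n => rRow_nonneg _

lemma abs_coord_le_nX (x : Xsp θ hθ) (n k : ℕ) : |x.val n k| ≤ nX x :=
  le_trans (abs_le_mRow (x.mem.1 n) k) (le_trans (le_max_left _ _) (rRow_le_nX x n))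

lemma nX_zero : nX (0 : Xsp θ hθ) = 0 := by
  apply le_antisymm
  · refine nX_le fun n => ?_
    have : rRow θ ((0 : Xsp θ hθ).val n) = 0 := rRow_zero
    simp [this]
  · exact nX_nonneg _

lemma nX_add_le (x y : Xsp θ hθ) : nX (x + y) ≤ nX x + nX y := by
  refine nX_le fun n => ?_
  have h1 : rRow θ ((x + y).val n) = rRow θ (fun k => x.val n k + y.val n k) :=
    rRow_congr fun k => rfl
  rw [h1]
  exact le_trans (rRow_add_le hθ (x.mem.1 n) (y.mem.1 n) (x.mem.2.1 n) (y.mem.2.1 n))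
    (add_le_add (rRow_le_nX x n) (rRow_le_nX y n))

lemma nX_neg (x : Xsp θ hθ) : nX (-x) = nX x := by
  unfold nX
  congr 1; funext n
  have h1 : rRow θ ((-x).val n) = rRow θ (fun k => -(x.val n k)) := rRow_congr fun k => rfl
  rw [h1, rRow_neg]

lemma nX_smul_le (c : ℝ) (x : Xsp θ hθ) : nX (c • x) ≤ |c| * nX x := by
  refine nX_le fun n => ?_
  have h1 : rRow θ ((c • x).val n) = rRow θ (fun k => c * x.val n k) :=
    rRow_congr fun k => rfl
  rw [h1]
  exact le_trans (rRow_smul_le hθ (x.mem.1 n))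
    (mul_le_mul_of_nonneg_left (rRow_le_nX x n) (abs_nonneg c))

lemma nX_eq_zero {x : Xsp θ hθ} (h : nX x = 0) : x = 0 := by
  ext n k
  have h1 : |x.val n k| ≤ 0 := h ▸ abs_coord_le_nX x n k
  have := abs_nonneg (x.val n k)
  simp only [zero_val]
  have : |x.val n k| = 0 := le_antisymm h1 this
  exact abs_eq_zero.mp this

def agNorm : AddGroupNorm (Xsp θ hθ) where
  toFun := nX
  map_zero' := nX_zero
  add_le' := nX_add_le
  neg' := nX_neg
  eq_zero_of_map_eq_zero' := fun x h => nX_eq_zero h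

instance : NormedAddCommGroup (Xsp θ hθ) := agNorm.toNormedAddCommGroup

lemma norm_def (x : Xsp θ hθ) : ‖x‖ = ⨆ n, rRow θ (x.val n) := rfl

instance : NormedSpace ℝ (Xsp θ hθ) where
  norm_smul_le c x := by
    have : ‖c • x‖ = nX (c • x) := rfl
    rw [this]
    exact le_trans (nX_smul_le c x) (by rw [Real.norm_eq_abs]; exact le_of_eq rfl)

lemma rRow_le_norm (x : Xsp θ hθ) (n : ℕ) : rRow θ (x.val n) ≤ ‖x‖ := rRow_le_nX x n

lemma norm_le {x : Xsp θ hθ} {a : ℝ} (h : ∀ n, rRow θ (x.val n) ≤ a) : ‖x‖ ≤ a :=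
  nX_le h

lemma abs_coord_le_norm (x : Xsp θ hθ) (n k : ℕ) : |x.val n k| ≤ ‖x‖ :=
  abs_coord_le_nX x n k

end Xsp


/-! ### Explicit vectors -/

section Vectors

variable {θ : ℝ} {hθ : 0 ≤ θ}

lemma bddAbove_indicator (p : ℕ → Prop) [DecidablePred p] (c : ℝ) :
    BddAbove (Set.range fun k => |if p k then c else 0|) := by
  refine ⟨|c|, ?_⟩
  rintro r ⟨k, rfl⟩
  by_cases h : p k <;> simp [h, abs_nonneg]

lemma summable_indicator_finset {θ : ℝ} (S : Finset ℕ) (f : ℕ → ℝ) :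
    Summable fun k => θ * |if k ∈ S then f k else 0| := by
  apply summable_of_ne_finset_zero (s := S)
  intro k hk
  simp [hk]

lemma mRow_indicator_le (p : ℕ → Prop) [DecidablePred p] (c : ℝ) :
    mRow (fun k => if p k then c else 0) ≤ |c| := by
  refine mRow_le fun k => ?_
  by_cases h : p k <;> simp [h, abs_nonneg]

lemma mRow_indicator (p : ℕ → Prop) [DecidablePred p] (c : ℝ) (h : ∃ k, p k) :
    mRow (fun k => if p k then c else 0) = |c| := by
  obtain ⟨k0, hk0⟩ := h
  refine le_antisymm (mRow_indicator_le p c) ?_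
  have := le_ciSup (f := fun k => |if p k then c else 0|) (bddAbove_indicator p c) k0
  simpa [hk0, mRow] using this

lemma sRow_indicator (S : Finset ℕ) (c : ℝ) :
    sRow θ (fun k => if k ∈ S then c else 0) = (S.card : ℝ) * (θ * |c|) := by
  unfold sRow
  rw [tsum_eq_sum (s := S) (by intro k hk; simp [hk])]
  rw [Finset.sum_congr rfl (fun k hk => show θ * |if k ∈ S then c else 0| = θ * |c| by simp [hk])]
  rw [Finset.sum_const]
  simp [mul_comm]

/-- An element supported on finitely many rows. -/
lemma memX_of_rows_subset (x : ℕ → ℕ → ℝ) (A : Finset ℕ)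
    (h0 : ∀ n, n ∉ A → ∀ k, x n k = 0)
    (hb : ∀ n, BddAbove (Set.range fun k => |x n k|))
    (hs : ∀ n, Summable fun k => θ * |x n k|) : MemX θ x := by
  refine ⟨hb, hs, ?_⟩
  have : (fun n => rRow θ (x n)) =ᶠ[atTop] (fun _ => (0:ℝ)) := by
    rw [Filter.eventuallyEq_iff_exists_mem]
    refine ⟨Set.Ioi (A.sup id), Ioi_mem_atTop _, fun n hn => ?_⟩
    have hnA : n ∉ A := by
      intro hmem
      exact absurd (Finset.le_sup (f := id) hmem) (not_le.mpr hn)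
    have h1 : rRow θ (x n) = rRow θ (fun _ => (0:ℝ)) := rRow_congr fun k => h0 n hnA k
    exact h1.trans rRow_zero
  exact (tendsto_congr' this).mpr tendsto_const_nhds

/-- The canonical unit vector in row `b`. -/
def uVec (θ : ℝ) (hθ : 0 ≤ θ) (b : ℕ) : Xsp θ hθ where
  val := fun n k => if n = b ∧ k = 0 then 1 else 0
  mem := by
    refine memX_of_rows_subset _ {b} (fun n hn k => ?_) (fun n => ?_) (fun n => ?_)
    · simp only [Finset.mem_singleton] at hn
      simp [hn]
    · have : (fun k => |if n = b ∧ k = 0 then (1:ℝ) else 0|)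
          = fun k => |if (n = b ∧ k = 0) then (1:ℝ) else 0| := rfl
      exact bddAbove_indicator _ _
    · by_cases h : n = b
      · have : (fun k => θ * |if n = b ∧ k = 0 then (1:ℝ) else 0|)
            = fun k => θ * |if k ∈ ({0} : Finset ℕ) then (1:ℝ) else 0| := by
          funext k
          by_cases hk : k = 0 <;> simp [h, hk]
        rw [this]
        exact summable_indicator_finset {0} _
      · have : (fun k => θ * |if n = b ∧ k = 0 then (1:ℝ) else 0|) = fun _ => 0 := by
          funext k; simp [h]
        rw [this]; exact summable_zero

lemma uVec_row_self (b : ℕ) (k : ℕ) :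
    (uVec θ hθ b).val b k = if k = 0 then 1 else 0 := by
  simp [uVec]

lemma uVec_row_ne {b n : ℕ} (h : n ≠ b) (k : ℕ) : (uVec θ hθ b).val n k = 0 := by
  simp [uVec, h]

lemma rRow_uVec_self (hθ1 : θ ≤ 1) (b : ℕ) : rRow θ ((uVec θ hθ b).val b) = 1 := by
  have h1 : rRow θ ((uVec θ hθ b).val b) = rRow θ (fun k => if k ∈ ({0} : Finset ℕ) then (1:ℝ) else 0) := by
    refine rRow_congr fun k => ?_
    rw [uVec_row_self]
    by_cases hk : k = 0 <;> simp [hk]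
  rw [h1]
  unfold rRow
  rw [sRow_indicator, mRow_indicator _ _ ⟨0, by simp⟩]
  simp
  linarith

lemma norm_uVec (hθ1 : θ ≤ 1) (b : ℕ) : ‖uVec θ hθ b‖ = 1 := by
  refine le_antisymm (Xsp.norm_le fun n => ?_) ?_
  · by_cases h : n = b
    · subst h; rw [rRow_uVec_self hθ1]
    · have : rRow θ ((uVec θ hθ b).val n) = rRow θ (fun _ => (0:ℝ)) :=
        rRow_congr fun k => uVec_row_ne h k
      rw [this, rRow_zero]; norm_num
  · have := Xsp.rRow_le_norm (uVec θ hθ b) b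
    rw [rRow_uVec_self hθ1] at this
    exact this

end Vectors


/-! ### More norm helpers -/

namespace Xsp

variable {θ : ℝ} {hθ : 0 ≤ θ}

lemma rRow_add_le' (x y : Xsp θ hθ) (n : ℕ) :
    rRow θ ((x + y).val n) ≤ rRow θ (x.val n) + rRow θ (y.val n) := by
  have h1 : rRow θ ((x + y).val n) = rRow θ (fun k => x.val n k + y.val n k) :=
    rRow_congr fun k => rfl
  rw [h1]
  exact rRow_add_le hθ (x.mem.1 n) (y.mem.1 n) (x.mem.2.1 n) (y.mem.2.1 n)

lemma rRow_neg' (y : Xsp θ hθ) (n : ℕ) : rRow θ ((-y).val n) = rRow θ (y.val n) := by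
  have h1 : rRow θ ((-y).val n) = rRow θ (fun k => -(y.val n k)) := rRow_congr fun k => rfl
  rw [h1, rRow_neg]

lemma rRow_sub_le' (x y : Xsp θ hθ) (n : ℕ) :
    rRow θ ((x - y).val n) ≤ rRow θ (x.val n) + rRow θ (y.val n) := by
  have h0 : x - y = x + (-y) := sub_eq_add_neg x y
  rw [h0]
  exact le_trans (rRow_add_le' x (-y) n) (by rw [rRow_neg' y n])

lemma sRow_sub_le' (x y : Xsp θ hθ) (n : ℕ) :
    sRow θ ((x - y).val n) ≤ sRow θ (x.val n) + sRow θ (y.val n) := by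
  have h1 : sRow θ ((x - y).val n) = sRow θ (fun k => x.val n k + (-(y.val n k))) :=
    sRow_congr fun k => by simp [sub_eq_add_neg]
  rw [h1]
  have h2 := sRow_add_le hθ (v := x.val n) (w := fun k => -(y.val n k)) (x.mem.2.1 n) ?_
  · have h3 : sRow θ (fun k => -(y.val n k)) = sRow θ (y.val n) := sRow_neg _
    rw [h3] at h2
    exact h2
  · have : (fun k => θ * |-(y.val n k)|) = fun k => θ * |y.val n k| := by
      funext k; rw [abs_neg]
    rw [this]; exact y.mem.2.1 n

end Xsp

/-! ### Thinness -/

section Thinness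

variable {θ : ℝ} {hθ : 0 ≤ θ}

lemma thinness_lower (r : ℝ) (hr : 0 < r)
    (hP : ∀ (n : ℕ) (x : Fin n → Xsp θ hθ), (∀ i, ‖x i‖ = 1) →
      ∀ ε : ℝ, 0 < ε → ∃ y : Xsp θ hθ, ‖y‖ = 1 ∧ ∀ i, ‖x i - y‖ < r + ε)
    (hθ1 : θ ≤ 1) : 1 ≤ r := by
  by_contra hlt
  push_neg at hlt
  set u := uVec θ hθ 0 with hu
  have hun : ‖u‖ = 1 := norm_uVec hθ1 0
  have hun' : ‖-u‖ = 1 := by rw [norm_neg]; exact hun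
  set ε := (1 - r) / 2 with hε
  have hεpos : 0 < ε := by simp [hε]; linarith
  obtain ⟨y, hy1, hy2⟩ := hP 2 ![u, -u] (by
    intro i
    fin_cases i <;> simpa) ε hεpos
  have d1 : ‖u - y‖ < r + ε := by simpa using hy2 0
  have d2 : ‖-u - y‖ < r + ε := by simpa using hy2 1
  have e1 : ‖y - u‖ < r + ε := by rw [norm_sub_rev]; exact d1
  have e2 : ‖y + u‖ < r + ε := by
    have : y + u = -(-u - y) := by abel
    rw [this, norm_neg]; exact d2
  have e3 : ‖y + y‖ = 2 := by
    have : y + y = (2:ℝ) • y := by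
      rw [two_smul]
    rw [this, norm_smul, hy1]
    norm_num
  have e4 : ‖y + y‖ ≤ ‖y - u‖ + ‖y + u‖ := by
    have : y + y = (y - u) + (y + u) := by abel
    rw [this]
    exact norm_add_le _ _
  rw [e3] at e4
  have : (2:ℝ) < 2 * (r + ε) := by linarith
  rw [hε] at this
  linarith

lemma thinness_upper (hθ1 : θ ≤ 1) :
    ∀ (n : ℕ) (x : Fin n → Xsp θ hθ), (∀ i, ‖x i‖ = 1) →
      ∀ ε : ℝ, 0 < ε → ∃ y : Xsp θ hθ, ‖y‖ = 1 ∧ ∀ i, ‖x i - y‖ < 1 + ε := by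
  intro n x hx ε hε
  -- find a fresh row
  have hev : ∀ᶠ b in atTop, ∀ i, rRow θ ((x i).val b) < ε / 2 := by
    rw [eventually_all]
    intro i
    have := (x i).mem.2.2
    have h2 : ∀ᶠ t in 𝓝 (0:ℝ), t < ε / 2 := eventually_lt_nhds (by linarith)
    exact this.eventually h2
  obtain ⟨b, hb⟩ := hev.exists
  refine ⟨uVec θ hθ b, norm_uVec hθ1 b, fun i => ?_⟩
  have hnorm : ‖x i - uVec θ hθ b‖ ≤ 1 + ε / 2 := by
    refine Xsp.norm_le fun m => ?_
    by_cases hm : m = b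
    · subst hm
      refine le_trans (Xsp.rRow_sub_le' _ _ m) ?_
      rw [rRow_uVec_self hθ1]
      have := le_of_lt (hb i)
      linarith
    · have h1 : rRow θ ((x i - uVec θ hθ b).val m) = rRow θ ((x i).val m) := by
        refine rRow_congr fun k => ?_
        rw [Xsp.sub_val, uVec_row_ne hm, sub_zero]
      rw [h1]
      have := Xsp.rRow_le_norm (x i) m
      rw [hx i] at this
      linarith
  linarith

lemma thinness_Xsp (hθ1 : θ ≤ 1) : thinness (Xsp θ hθ) = 1 := by
  unfold thinness
  apply le_antisymm
  · apply csInf_le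
    · refine ⟨0, fun r hr => le_of_lt hr.1⟩
    · exact ⟨one_pos, thinness_upper hθ1⟩
  · refine le_csInf ⟨1, one_pos, thinness_upper hθ1⟩ ?_
    rintro r ⟨hr0, hrP⟩
    exact thinness_lower r hr0 hrP hθ1

end Thinness


/-! ### Thickness of X -/

section Thickness

variable {θ : ℝ} {hθ : 0 ≤ θ}

lemma dist_to_signed_u (hθ1 : θ ≤ 1) (x : Xsp θ hθ) (hx1 : ‖x‖ ≤ 1) (σ : ℝ)
    (hσ : σ = 1 ∨ σ = -1) (hsign : |x.val 0 0 - σ| ≤ 1) :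
    ‖x - σ • uVec θ hθ 0‖ ≤ 1 + θ := by
  have habs : |σ| = 1 := by rcases hσ with h | h <;> simp [h]
  refine Xsp.norm_le fun m => ?_
  by_cases hm : m = 0
  · subst hm
    refine rRow_le ?_ ?_
    · -- mRow bound
      refine le_trans (mRow_le (a := 1) fun k => ?_) (by linarith)
      have hval : (x - σ • uVec θ hθ 0).val 0 k
          = x.val 0 k - σ * (if k = 0 then 1 else 0) := by
        rw [Xsp.sub_val, Xsp.smul_val, uVec_row_self]
      by_cases hk : k = 0
      · subst hk; rw [hval]; simpa using hsign
      · rw [hval]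
        simp only [hk, if_false, mul_zero, sub_zero]
        exact le_trans (Xsp.abs_coord_le_norm x 0 k) hx1
    · -- sRow bound
      refine le_trans (Xsp.sRow_sub_le' x (σ • uVec θ hθ 0) 0) ?_
      have h1 : sRow θ ((σ • uVec θ hθ 0).val 0) = θ := by
        have h2 : sRow θ ((σ • uVec θ hθ 0).val 0)
            = sRow θ (fun k => σ * (if k ∈ ({0} : Finset ℕ) then (1:ℝ) else 0)) := by
          refine sRow_congr fun k => ?_
          rw [Xsp.smul_val, uVec_row_self]
          by_cases hk : k = 0 <;> simp [hk]
        rw [h2, sRow_smul, sRow_indicator, habs]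
        simp
      rw [h1]
      have h3 : sRow θ (x.val 0) ≤ 1 :=
        le_trans (sRow_le_of_rRow_le (le_refl _)) (le_trans (Xsp.rRow_le_norm x 0) hx1)
      linarith
  · have h1 : rRow θ ((x - σ • uVec θ hθ 0).val m) = rRow θ (x.val m) := by
      refine rRow_congr fun k => ?_
      rw [Xsp.sub_val, Xsp.smul_val, uVec_row_ne hm, mul_zero, sub_zero]
    rw [h1]
    exact le_trans (le_trans (Xsp.rRow_le_norm x m) hx1) (by linarith)

lemma thickness_upper_mem (hθ1 : θ ≤ 1) :
    (0:ℝ) < 1 + θ ∧ ∃ (n : ℕ) (c : Fin n → Xsp θ hθ), (∀ i, ‖c i‖ = 1) ∧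
      Metric.closedBall (0 : Xsp θ hθ) 1 ⊆ ⋃ i, Metric.closedBall (c i) (1 + θ) := by
  refine ⟨by linarith, 2, (fun i : Fin 2 => if i = 0 then uVec θ hθ 0 else -uVec θ hθ 0), ?_, ?_⟩
  · intro i
    by_cases hi : i = 0
    · simp only [hi, if_pos]
      exact norm_uVec hθ1 0
    · simp only [hi, if_neg, norm_neg]
      simp only [if_false]
      rw [norm_neg]
      exact norm_uVec hθ1 0
  · intro x hx
    have hx1 : ‖x‖ ≤ 1 := by
      rwa [Metric.mem_closedBall, dist_zero_right] at hx
    have hx00 : |x.val 0 0| ≤ 1 := le_trans (Xsp.abs_coord_le_norm x 0 0) hx1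
    rw [abs_le] at hx00
    by_cases hsgn : 0 ≤ x.val 0 0
    · refine Set.mem_iUnion.2 ⟨0, ?_⟩
      rw [Metric.mem_closedBall, dist_eq_norm]
      have := dist_to_signed_u hθ1 x hx1 1 (Or.inl rfl)
        (by rw [abs_le]; constructor <;> linarith)
      rw [one_smul] at this
      simpa using this
    · refine Set.mem_iUnion.2 ⟨1, ?_⟩
      rw [Metric.mem_closedBall, dist_eq_norm]
      have := dist_to_signed_u hθ1 x hx1 (-1) (Or.inr rfl)
        (by rw [abs_le]; push_neg at hsgn; constructor <;> linarith)
      have hrw : x - (-1 : ℝ) • uVec θ hθ 0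
          = x - (fun i : Fin 2 => if i = 0 then uVec θ hθ 0 else -uVec θ hθ 0) 1 := by
        norm_num
      rwa [hrw] at this

lemma thickness_lower_eps (hθ1 : θ ≤ 1) (r : ℝ) (n : ℕ) (c : Fin n → Xsp θ hθ)
    (hc : ∀ i, ‖c i‖ = 1)
    (hcov : Metric.closedBall (0 : Xsp θ hθ) 1 ⊆ ⋃ i, Metric.closedBall (c i) r)
    (ε : ℝ) (hε : 0 < ε) (hε1 : ε ≤ 1) : 1 + θ - 3 * ε ≤ r := by
  -- dispose of n = 0
  rcases Nat.eq_zero_or_pos n with hn0 | hn1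
  · subst hn0
    have h0 : (0 : Xsp θ hθ) ∈ Metric.closedBall (0 : Xsp θ hθ) 1 := by
      simp [Metric.mem_closedBall]
    rcases Set.mem_iUnion.1 (hcov h0) with ⟨i, _⟩
    exact i.elim0
  rcases eq_or_lt_of_le hθ with hz | hp
  · -- θ = 0 : use a fresh row
    have hev : ∀ᶠ b in atTop, ∀ i, rRow θ ((c i).val b) < ε := by
      rw [eventually_all]
      intro i
      exact (c i).mem.2.2.eventually (eventually_lt_nhds hε)
    obtain ⟨b, hb⟩ := hev.exists
    set x := uVec θ hθ b with hxdef
    have hxball : x ∈ Metric.closedBall (0 : Xsp θ hθ) 1 := by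
      rw [Metric.mem_closedBall, dist_zero_right, norm_uVec hθ1]
    rcases Set.mem_iUnion.1 (hcov hxball) with ⟨i, hi⟩
    rw [Metric.mem_closedBall, dist_eq_norm] at hi
    have hlow : 1 - ε ≤ ‖x - c i‖ := by
      have h1 : |(x - c i).val b 0| ≤ ‖x - c i‖ := Xsp.abs_coord_le_norm _ b 0
      have h2 : (x - c i).val b 0 = 1 - (c i).val b 0 := by
        rw [Xsp.sub_val, hxdef, uVec_row_self]; simp
      have h3 : |(c i).val b 0| ≤ rRow θ ((c i).val b) :=
        le_trans (abs_le_mRow ((c i).mem.1 b) 0) (le_max_left _ _)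
      have h4 : |(c i).val b 0| < ε := lt_of_le_of_lt h3 (hb i)
      have h5 : 1 - ε ≤ |1 - (c i).val b 0| := by
        rcases abs_lt.1 h4 with ⟨h6, h7⟩
        rcases abs_cases (1 - (c i).val b 0) with ⟨h8, _⟩ | ⟨h8, _⟩ <;> linarith
      rw [h2] at h1
      linarith
    rw [← hz]
    linarith
  · -- θ > 0 : spread vectors
    -- peak rows
    have hbex : ∀ i, ∃ b, 1 - ε < rRow θ ((c i).val b) := by
      intro i
      have h1 : 1 - ε < ‖c i‖ := by rw [hc i]; linarith
      exact exists_lt_of_lt_ciSup h1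
    choose b hbpk using hbex
    -- lower bound for the ℓ¹ mass of the peak row
    have hsLow : ∀ i, θ * (1 - ε) ≤ sRow θ ((c i).val (b i)) := by
      intro i
      rcases lt_max_iff.1 (hbpk i) with hm | hs
      · obtain ⟨k0, hk0⟩ := exists_lt_of_lt_ciSup hm
        have h1 : θ * |(c i).val (b i) k0| ≤ sRow θ ((c i).val (b i)) :=
          Summable.le_tsum ((c i).mem.2.1 (b i)) k0
            (fun j _ => mul_nonneg hθ (abs_nonneg _))
        have h2 : θ * (1 - ε) ≤ θ * |(c i).val (b i) k0| :=
          mul_le_mul_of_nonneg_left (le_of_lt hk0) hθ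
        linarith
      · have h1 : θ * (1 - ε) ≤ 1 - ε := by
          nlinarith
        linarith
    -- choose K beyond which the tails are small
    have hKex : ∀ i, ∃ K, ∀ K' ≥ K,
        sRow θ ((c i).val (b i)) - ε ≤ ∑ k ∈ Finset.range K', θ * |(c i).val (b i) k| := by
      intro i
      have h1 := ((c i).mem.2.1 (b i)).hasSum.tendsto_sum_nat
      have h2 : ∀ᶠ J in atTop, sRow θ ((c i).val (b i)) - ε
          < ∑ k ∈ Finset.range J, θ * |(c i).val (b i) k| := by
        refine h1.eventually (eventually_gt_nhds ?_)
        have : (0:ℝ) < ε := hε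
        show sRow θ ((c i).val (b i)) - ε < sRow θ ((c i).val (b i))
        linarith
      rcases eventually_atTop.1 h2 with ⟨K, hK⟩
      exact ⟨K, fun K' hK' => le_of_lt (hK K' hK')⟩
    choose Kf hKf using hKex
    set K := Finset.univ.sup Kf with hKdef
    have hKge : ∀ i, Kf i ≤ K := fun i => Finset.le_sup (Finset.mem_univ i)
    set N := max (Nat.ceil (1 / θ)) 1 with hNdef
    have hN1 : 1 ≤ N := le_max_right _ _
    have hNθ : 1 ≤ θ * N := by
      have h1 : (1:ℝ) / θ ≤ Nat.ceil (1 / θ) := Nat.le_ceil _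
      have h2 : (Nat.ceil (1/θ) : ℝ) ≤ N := by
        exact_mod_cast Nat.cast_le.mpr (le_max_left _ _)
      have h3 : (1:ℝ)/θ ≤ N := le_trans h1 h2
      calc (1:ℝ) = θ * (1/θ) := by field_simp
        _ ≤ θ * N := mul_le_mul_of_nonneg_left h3 hθ
    have hθN0 : 0 < θ * N := lt_of_lt_of_le one_pos hNθ
    set v := 1 / (θ * N) with hvdef
    have hv0 : 0 < v := by positivity
    have hv1 : v ≤ 1 := by
      rw [hvdef, div_le_one hθN0]; exact hNθ
    have hvsum : (N:ℝ) * (θ * v) = 1 := by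
      rw [hvdef]
      field_simp
    set A := Finset.image b Finset.univ with hAdef
    -- the spread element
    set xf : ℕ → ℕ → ℝ :=
      fun m k => if m ∈ A ∧ k ∈ Finset.Ico K (K + N) then v else 0 with hxf
    have hrowA : ∀ m, m ∈ A → ∀ k, xf m k = (fun k => if k ∈ Finset.Ico K (K+N) then v else 0) k := by
      intro m hm k
      simp only [hxf]
      by_cases hk : k ∈ Finset.Ico K (K+N) <;> simp [hm, hk]
    have hrownA : ∀ m, m ∉ A → ∀ k, xf m k = 0 := by
      intro m hm k
      simp only [hxf]
      simp [hm]
    have hmem : MemX θ xf := by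
      refine memX_of_rows_subset xf A hrownA (fun m => ?_) (fun m => ?_)
      · have : (fun k => |xf m k|) = fun k => |if (m ∈ A ∧ k ∈ Finset.Ico K (K+N)) then v else 0| := rfl
        rw [this]
        exact bddAbove_indicator _ v
      · by_cases hm : m ∈ A
        · have : (fun k => θ * |xf m k|)
              = fun k => θ * |if k ∈ Finset.Ico K (K+N) then v else 0| := by
            funext k; rw [hrowA m hm k]
          rw [this]
          exact summable_indicator_finset _ _
        · have : (fun k => θ * |xf m k|) = fun _ => 0 := by
            funext k; rw [hrownA m hm k]; simp
          rw [this]; exact summable_zero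
    set x : Xsp θ hθ := ⟨xf, hmem⟩ with hxdef
    have hxnorm : ‖x‖ ≤ 1 := by
      refine Xsp.norm_le fun m => ?_
      by_cases hm : m ∈ A
      · have h1 : rRow θ (x.val m) = rRow θ (fun k => if k ∈ Finset.Ico K (K+N) then v else 0) :=
          rRow_congr (hrowA m hm)
        rw [h1]
        refine rRow_le ?_ ?_
        · exact le_trans (mRow_indicator_le _ v) (by rw [abs_of_pos hv0]; exact hv1)
        · rw [sRow_indicator, Nat.card_Ico, abs_of_pos hv0]
          have : (K + N - K) = N := by omega
          rw [this]
          rw [hvsum]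
        -- done
      · have h1 : rRow θ (x.val m) = rRow θ (fun _ => (0:ℝ)) := rRow_congr (hrownA m hm)
        rw [h1, rRow_zero]
        norm_num
    have hxball : x ∈ Metric.closedBall (0 : Xsp θ hθ) 1 := by
      rwa [Metric.mem_closedBall, dist_zero_right]
    rcases Set.mem_iUnion.1 (hcov hxball) with ⟨i, hi⟩
    rw [Metric.mem_closedBall, dist_eq_norm] at hi
    -- lower bound the distance on row b i
    set b0 := b i with hb0
    have hb0A : b0 ∈ A := Finset.mem_image_of_mem b (Finset.mem_univ i)
    have hxrow : ∀ k, x.val b0 k = if k ∈ Finset.Ico K (K+N) then v else 0 :=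
      hrowA b0 hb0A
    set w : ℕ → ℝ := fun k => (x - c i).val b0 k with hwdef
    have hwsum : Summable fun k => θ * |w k| := (x - c i).mem.2.1 b0
    -- partial sums
    have hT1 : ∑ k ∈ Finset.range K, θ * |w k|
        = ∑ k ∈ Finset.range K, θ * |(c i).val b0 k| := by
      refine Finset.sum_congr rfl fun k hk => ?_
      have hk' : k ∉ Finset.Ico K (K+N) := by
        simp only [Finset.mem_Ico]
        intro hcon
        exact absurd (Finset.mem_range.1 hk) (not_lt.mpr hcon.1)
      have : w k = 0 - (c i).val b0 k := by
        rw [hwdef]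
        simp only [Xsp.sub_val]
        rw [hxrow k]
        simp [hk']
      rw [this]
      simp
    have hT1ge : sRow θ ((c i).val b0) - ε ≤ ∑ k ∈ Finset.range K, θ * |(c i).val b0 k| :=
      hKf i K (hKge i)
    -- mass of c i on the spread support is small
    have hmass : ∑ k ∈ Finset.Ico K (K+N), θ * |(c i).val b0 k| ≤ ε := by
      have hsplit : ∑ k ∈ Finset.range K, θ * |(c i).val b0 k|
            + ∑ k ∈ Finset.Ico K (K+N), θ * |(c i).val b0 k|
          = ∑ k ∈ Finset.range (K+N), θ * |(c i).val b0 k| := by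
        simp only [Finset.range_eq_Ico]
        exact Finset.sum_Ico_consecutive _ (Nat.zero_le K) (Nat.le_add_right K N)
      have hle : ∑ k ∈ Finset.range (K+N), θ * |(c i).val b0 k| ≤ sRow θ ((c i).val b0) :=
        Summable.sum_le_tsum _ (fun j _ => mul_nonneg hθ (abs_nonneg _)) ((c i).mem.2.1 b0)
      linarith
    have hT2 : (1:ℝ) - ε ≤ ∑ k ∈ Finset.Ico K (K+N), θ * |w k| := by
      have hpt : ∀ k ∈ Finset.Ico K (K+N), θ * v - θ * |(c i).val b0 k| ≤ θ * |w k| := by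
        intro k hk
        have hw : w k = v - (c i).val b0 k := by
          rw [hwdef]
          simp only [Xsp.sub_val]
          rw [hxrow k]
          simp [hk]
        have h1 : v - |(c i).val b0 k| ≤ |w k| := by
          rw [hw]
          have := abs_sub_abs_le_abs_sub v ((c i).val b0 k)
          have h2 : |v| = v := abs_of_pos hv0
          linarith [abs_sub_abs_le_abs_sub v ((c i).val b0 k)]
        nlinarith
      have hsum1 : ∑ k ∈ Finset.Ico K (K+N), (θ * v - θ * |(c i).val b0 k|)
          ≤ ∑ k ∈ Finset.Ico K (K+N), θ * |w k| := Finset.sum_le_sum hpt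
      have hsum2 : ∑ k ∈ Finset.Ico K (K+N), (θ * v - θ * |(c i).val b0 k|)
          = (N:ℝ) * (θ * v) - ∑ k ∈ Finset.Ico K (K+N), θ * |(c i).val b0 k| := by
        rw [Finset.sum_sub_distrib, Finset.sum_const, Nat.card_Ico]
        have : (K + N - K) = N := by omega
        rw [this]
        simp [nsmul_eq_mul]
      rw [hsum2, hvsum] at hsum1
      linarith
    have htot : 1 + θ - 3*ε ≤ sRow θ w := by
      have hsplit : ∑ k ∈ Finset.range K, θ * |w k|
            + ∑ k ∈ Finset.Ico K (K+N), θ * |w k|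
          = ∑ k ∈ Finset.range (K+N), θ * |w k| := by
        simp only [Finset.range_eq_Ico]
        exact Finset.sum_Ico_consecutive _ (Nat.zero_le K) (Nat.le_add_right K N)
      have hle : ∑ k ∈ Finset.range (K+N), θ * |w k| ≤ sRow θ w :=
        Summable.sum_le_tsum _ (fun j _ => mul_nonneg hθ (abs_nonneg _)) hwsum
      have h1 : θ * (1 - ε) ≤ sRow θ ((c i).val b0) := hsLow i
      have hθε : 0 ≤ θ * ε := mul_nonneg hθ (le_of_lt hε)
      nlinarith [hT1ge, hT2, hT1]
    have hfin : sRow θ w ≤ ‖x - c i‖ := by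
      have h1 : sRow θ w ≤ rRow θ ((x - c i).val b0) := le_max_right _ _
      exact le_trans h1 (Xsp.rRow_le_norm _ b0)
    linarith

lemma thickness_Xsp (hθ1 : θ ≤ 1) : thickness (Xsp θ hθ) = 1 + θ := by
  unfold thickness
  apply le_antisymm
  · apply csInf_le
    · exact ⟨0, fun r hr => le_of_lt hr.1⟩
    · exact thickness_upper_mem hθ1
  · refine le_csInf ⟨1 + θ, thickness_upper_mem hθ1⟩ ?_
    rintro r ⟨hr0, n, c, hc, hcov⟩
    by_contra hlt
    push_neg at hlt
    set ε := (1 + θ - r) / 4 with hεdef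
    have hε0 : 0 < ε := by rw [hεdef]; linarith
    have hε1 : ε ≤ 1 := by
      rw [hεdef]
      have : 0 < r := hr0
      linarith
    have := thickness_lower_eps hθ1 r n c hc hcov ε hε0 hε1
    rw [hεdef] at this
    linarith

end Thickness


/-! ### Thickness of the dual -/

section Dual

variable {θ : ℝ} {hθ : 0 ≤ θ}

def coordL (θ : ℝ) (hθ : 0 ≤ θ) (n k : ℕ) : Xsp θ hθ →ₗ[ℝ] ℝ where
  toFun := fun x => x.val n k
  map_add' := fun x y => rfl
  map_smul' := fun c x => rfl

def coordCLM (θ : ℝ) (hθ : 0 ≤ θ) (n k : ℕ) : StrongDual ℝ (Xsp θ hθ) :=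
  LinearMap.mkContinuous (coordL θ hθ n k) 1 (fun x => by
    rw [one_mul, Real.norm_eq_abs]
    exact Xsp.abs_coord_le_norm x n k)

@[simp] lemma coordCLM_apply (n k : ℕ) (x : Xsp θ hθ) :
    coordCLM θ hθ n k x = x.val n k := rfl

lemma norm_coordCLM (hθ1 : θ ≤ 1) (b : ℕ) : ‖coordCLM θ hθ b 0‖ = 1 := by
  apply le_antisymm
  · exact LinearMap.mkContinuous_norm_le _ zero_le_one _
  · have h1 : (1:ℝ) = |coordCLM θ hθ b 0 (uVec θ hθ b)| := by
      rw [coordCLM_apply, uVec_row_self]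
      norm_num
    have h2 := (coordCLM θ hθ b 0).le_opNorm (uVec θ hθ b)
    rw [norm_uVec hθ1, mul_one, Real.norm_eq_abs] at h2
    linarith [h1 ▸ h2]

lemma rRow_ind01 (hθ1 : θ ≤ 1) :
    rRow θ (fun k => if k = 0 then (1:ℝ) else 0) = 1 := by
  have h1 : rRow θ (fun k => if k = 0 then (1:ℝ) else 0)
      = rRow θ (fun k => if k ∈ ({0} : Finset ℕ) then (1:ℝ) else 0) := by
    refine rRow_congr fun k => ?_
    by_cases hk : k = 0 <;> simp [hk]
  rw [h1]
  unfold rRow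
  rw [sRow_indicator, mRow_indicator _ _ ⟨0, by simp⟩]
  simp
  linarith

/-- Pigeonhole: some row is far from finitely many unit functionals. -/
lemma exists_far_row (ε : ℝ) (hε : 0 < ε) (n : ℕ)
    (f : Fin n → StrongDual ℝ (Xsp θ hθ)) (hf : ∀ i, ‖f i‖ = 1) :
    ∃ b, ∀ i (z : Xsp θ hθ), (∀ m, m ≠ b → ∀ k, z.val m k = 0) → ‖z‖ ≤ 1 →
      |f i z| ≤ ε := by
  by_contra hcon
  push_neg at hcon
  choose I Z hsupp hzn hval using hcon
  obtain ⟨i₀, hfib⟩ := Finite.exists_infinite_fiber I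
  have hinf : (I ⁻¹' {i₀}).Infinite := Set.infinite_coe_iff.mp hfib
  set e := hinf.natEmbedding with he
  set m := Nat.ceil (1/ε) + 1 with hm
  have hmε : 1 < (m:ℝ) * ε := by
    have h1 : (1:ℝ)/ε ≤ Nat.ceil (1/ε) := Nat.le_ceil _
    have h2 : ((Nat.ceil (1/ε) : ℕ) : ℝ) < m := by
      rw [hm]; push_cast; linarith
    have h3 : (1:ℝ)/ε < m := lt_of_le_of_lt h1 h2
    calc (1:ℝ) = (1/ε) * ε := by field_simp
      _ < m * ε := by apply mul_lt_mul_of_pos_right h3 hε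
  set B : Fin m → ℕ := fun j => (e j).val with hB
  have hBfib : ∀ j, I (B j) = i₀ := fun j => (e j).property
  have hBinj : Function.Injective B := by
    intro a b hab
    exact Fin.val_injective (e.injective (Subtype.coe_injective hab))
  set σ : Fin m → ℝ := fun j => if 0 ≤ f i₀ (Z (B j)) then 1 else -1 with hσ
  have hσabs : ∀ j, |σ j| = 1 := by
    intro j; rw [hσ]; by_cases h : 0 ≤ f i₀ (Z (B j)) <;> simp [h]
  have hσval : ∀ j, σ j * f i₀ (Z (B j)) = |f i₀ (Z (B j))| := by
    intro j
    by_cases h : 0 ≤ f i₀ (Z (B j))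
    · have hs : σ j = 1 := by rw [hσ]; simp [h]
      rw [hs, abs_of_nonneg h, one_mul]
    · push_neg at h
      have hs : σ j = -1 := by rw [hσ]; simp [not_le.mpr h]
      rw [hs, abs_of_neg h]
      ring
  set x : Xsp θ hθ := ∑ j : Fin m, σ j • Z (B j) with hx
  have hxval : ∀ p q, x.val p q = ∑ j : Fin m, σ j * (Z (B j)).val p q := by
    intro p q
    rw [hx]
    have := map_sum (coordL θ hθ p q) (fun j => σ j • Z (B j)) Finset.univ
    exact this
  have hxnorm : ‖x‖ ≤ 1 := by
    refine Xsp.norm_le fun p => ?_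
    by_cases hp : ∃ j, B j = p
    · obtain ⟨j₀, hj₀⟩ := hp
      have hrow : ∀ q, x.val p q = σ j₀ * (Z (B j₀)).val p q := by
        intro q
        rw [hxval]
        refine Finset.sum_eq_single j₀ (fun j _ hj => ?_) (fun h => absurd (Finset.mem_univ j₀) h)
        have hBj : B j ≠ p := fun hc => hj (hBinj (hc.trans hj₀.symm))
        rw [hsupp (B j) p (fun hc => hBj hc.symm) q]
        ring
      have h1 : rRow θ (x.val p) = rRow θ (fun q => σ j₀ * (Z (B j₀)).val p q) :=
        rRow_congr hrow
      rw [h1]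
      refine le_trans (rRow_smul_le hθ ((Z (B j₀)).mem.1 p)) ?_
      rw [hσabs j₀, one_mul]
      exact le_trans (Xsp.rRow_le_norm _ p) (hzn (B j₀))
    · push_neg at hp
      have hrow : ∀ q, x.val p q = 0 := by
        intro q
        rw [hxval]
        refine Finset.sum_eq_zero fun j _ => ?_
        rw [hsupp (B j) p (fun hc => hp j hc.symm) q]
        ring
      have h1 : rRow θ (x.val p) = rRow θ (fun _ => (0:ℝ)) := rRow_congr hrow
      rw [h1, rRow_zero]
      norm_num
  have hsum : f i₀ x = ∑ j : Fin m, |f i₀ (Z (B j))| := by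
    rw [hx, map_sum]
    refine Finset.sum_congr rfl fun j _ => ?_
    rw [map_smul]
    exact hσval j
  have hbig : (m:ℝ) * ε < f i₀ x := by
    rw [hsum]
    have h1 : ∀ j ∈ (Finset.univ : Finset (Fin m)), ε < |f i₀ (Z (B j))| := by
      intro j _
      have := hval (B j) -- ε < |f (I (B j)) (Z (B j))|
      rwa [hBfib j] at this
    have hne : (Finset.univ : Finset (Fin m)).Nonempty := by
      refine ⟨⟨0, ?_⟩, Finset.mem_univ _⟩
      rw [hm]; omega
    have h2 := Finset.sum_lt_sum_of_nonempty hne h1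
    have h3 : ∑ _j : Fin m, ε = (m:ℝ) * ε := by
      rw [Finset.sum_const]
      simp [nsmul_eq_mul]
    rw [h3] at h2
    exact h2
  have hle : f i₀ x ≤ 1 := by
    have h1 := (f i₀).le_opNorm x
    rw [hf i₀, one_mul, Real.norm_eq_abs] at h1
    exact le_trans (le_abs_self _) (le_trans h1 hxnorm)
  linarith

lemma dual_thickness_lower (hθ1 : θ ≤ 1) (r : ℝ) (hr0 : 0 < r) (n : ℕ)
    (f : Fin n → StrongDual ℝ (Xsp θ hθ)) (hf : ∀ i, ‖f i‖ = 1)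
    (hcov : Metric.closedBall (0 : StrongDual ℝ (Xsp θ hθ)) 1 ⊆
      ⋃ i, Metric.closedBall (f i) r) : 2 ≤ r := by
  by_contra hlt
  push_neg at hlt
  -- dispose of n = 0
  rcases Nat.eq_zero_or_pos n with hn0 | hn1
  · subst hn0
    have h0 : (0 : StrongDual ℝ (Xsp θ hθ)) ∈
        Metric.closedBall (0 : StrongDual ℝ (Xsp θ hθ)) 1 := by
      simp [Metric.mem_closedBall]
    rcases Set.mem_iUnion.1 (hcov h0) with ⟨i, _⟩
    exact i.elim0
  set ε := (2 - r) / 4 with hεdef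
  have hε0 : 0 < ε := by rw [hεdef]; linarith
  obtain ⟨b, hb⟩ := exists_far_row ε hε0 n f hf
  set g := coordCLM θ hθ b 0 with hg
  have hgnorm : ‖g‖ = 1 := norm_coordCLM hθ1 b
  have hgball : g ∈ Metric.closedBall (0 : StrongDual ℝ (Xsp θ hθ)) 1 := by
    rw [Metric.mem_closedBall, dist_zero_right, hgnorm]
  rcases Set.mem_iUnion.1 (hcov hgball) with ⟨i, hi⟩
  rw [Metric.mem_closedBall] at hi
  -- a near-norming vector for f i
  have h1 : ¬ ∀ x : Xsp θ hθ, |f i x| ≤ (1 - ε) * ‖x‖ := by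
    intro hall
    have hεhalf : ε ≤ 1/2 := by rw [hεdef]; linarith
    have h2 := ContinuousLinearMap.opNorm_le_bound (f i) (M := 1 - ε)
      (by linarith)
      (fun x => by rw [Real.norm_eq_abs]; exact hall x)
    rw [hf i] at h2
    linarith
  push_neg at h1
  obtain ⟨x, hx⟩ := h1
  have hxne : x ≠ 0 := by
    intro hc
    rw [hc, norm_zero, mul_zero, map_zero, abs_zero] at hx
    exact lt_irrefl 0 hx
  have hxpos : 0 < ‖x‖ := norm_pos_iff.mpr hxne
  set y := (‖x‖)⁻¹ • x with hy
  have hyn : ‖y‖ = 1 := by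
    rw [hy, norm_smul, Real.norm_eq_abs, abs_of_pos (inv_pos.mpr hxpos)]
    field_simp
  have hfy : 1 - ε < |f i y| := by
    rw [hy, map_smul]
    rw [smul_eq_mul, abs_mul, abs_of_pos (inv_pos.mpr hxpos)]
    rw [inv_mul_eq_div, lt_div_iff₀ hxpos]
    linarith [hx]
  set x₀ := if 0 ≤ f i y then y else -y with hx₀
  have hx₀n : ‖x₀‖ = 1 := by
    rw [hx₀]; by_cases h : 0 ≤ f i y <;> simp [h, norm_neg, hyn]
  have hfx₀ : 1 - ε < f i x₀ := by
    rw [hx₀]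
    by_cases h : 0 ≤ f i y
    · simp only [h, if_pos]
      rwa [abs_of_nonneg h] at hfy
    · push_neg at h
      simp only [not_le.mpr h, if_neg, if_false, map_neg]
      rwa [abs_of_neg h] at hfy
  -- the modification in row b
  set zf : ℕ → ℕ → ℝ :=
    fun p q => if p = b then x₀.val b q + (if q = 0 then 1 else 0) else 0 with hzf
  have hzmem : MemX θ zf := by
    refine memX_of_rows_subset zf {b} (fun p hp q => ?_) (fun p => ?_) (fun p => ?_)
    · have hpb : p ≠ b := by simpa using hp
      simp [hzf, hpb]
    · by_cases hp : p = b
      · have hshape : (fun q => |zf p q|)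
            = fun q => |x₀.val b q + (if q = 0 then 1 else 0)| := by
          funext q; rw [hzf]; simp [hp]
        rw [hshape]
        exact bddAbove_add (x₀.mem.1 b) (bddAbove_indicator (fun q => q = 0) 1)
      · have hshape : (fun q => |zf p q|) = fun _ => |(0:ℝ)| := by
          funext q; rw [hzf]; simp [hp]
        rw [hshape]
        exact ⟨0, by rintro s ⟨q, rfl⟩; simp⟩
    · by_cases hp : p = b
      · have hshape : (fun q => θ * |zf p q|)
            = fun q => θ * |x₀.val b q + (if q = 0 then 1 else 0)| := by
          funext q; rw [hzf]; simp [hp]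
        rw [hshape]
        refine summable_add hθ (x₀.mem.2.1 b) ?_
        have : (fun q => θ * |if q = 0 then (1:ℝ) else 0|)
            = fun q => θ * |if q ∈ ({0}:Finset ℕ) then (1:ℝ) else 0| := by
          funext q; by_cases hq : q = 0 <;> simp [hq]
        rw [this]
        exact summable_indicator_finset {0} _
      · have hshape : (fun q => θ * |zf p q|) = fun _ => 0 := by
          funext q; rw [hzf]; simp [hp]
        rw [hshape]
        exact summable_zero
  set z : Xsp θ hθ := ⟨zf, hzmem⟩ with hz
  have hzsupp : ∀ p, p ≠ b → ∀ q, z.val p q = 0 := by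
    intro p hp q
    rw [hz]
    simp [hzf, hp]
  have hznorm : ‖z‖ ≤ 2 := by
    refine Xsp.norm_le fun p => ?_
    by_cases hp : p = b
    · have hshape : rRow θ (z.val p)
          = rRow θ (fun q => x₀.val b q + (if q = 0 then 1 else 0)) := by
        refine rRow_congr fun q => ?_
        rw [hz]; simp [hzf, hp]
      rw [hshape]
      have h1 := rRow_add_le hθ (v := x₀.val b) (w := fun q => if q = 0 then (1:ℝ) else 0)
        (x₀.mem.1 b) (bddAbove_indicator _ 1) (x₀.mem.2.1 b) ?_
      · refine le_trans h1 ?_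
        rw [rRow_ind01 hθ1]
        have h2 : rRow θ (x₀.val b) ≤ 1 := by
          have := Xsp.rRow_le_norm x₀ b
          rwa [hx₀n] at this
        linarith
      · have : (fun q => θ * |if q = 0 then (1:ℝ) else 0|)
            = fun q => θ * |if q ∈ ({0}:Finset ℕ) then (1:ℝ) else 0| := by
          funext q; by_cases hq : q = 0 <;> simp [hq]
        rw [this]
        exact summable_indicator_finset {0} _
    · have hshape : rRow θ (z.val p) = rRow θ (fun _ => (0:ℝ)) :=
        rRow_congr fun q => hzsupp p hp q
      rw [hshape, rRow_zero]
      norm_num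
  have hfz : |f i z| ≤ 2 * ε := by
    set half := (2⁻¹ : ℝ) • z with hhalf
    have hhn : ‖half‖ ≤ 1 := by
      rw [hhalf, norm_smul, Real.norm_eq_abs]
      rw [abs_of_pos (by norm_num : (0:ℝ) < 2⁻¹)]
      linarith
    have hhsupp : ∀ p, p ≠ b → ∀ q, half.val p q = 0 := by
      intro p hp q
      rw [hhalf, Xsp.smul_val, hzsupp p hp q, mul_zero]
    have h1 : |f i half| ≤ ε := hb i half hhsupp hhn
    have h2 : z = (2:ℝ) • half := by
      rw [hhalf, smul_smul]
      norm_num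
    rw [h2, map_smul, smul_eq_mul, abs_mul]
    rw [abs_of_pos (by norm_num : (0:ℝ) < 2)]
    linarith
  set x' := x₀ - z with hx'
  have hx'norm : ‖x'‖ ≤ 1 := by
    refine Xsp.norm_le fun p => ?_
    by_cases hp : p = b
    · have hshape : rRow θ (x'.val p) = rRow θ (fun q => -(if q = 0 then (1:ℝ) else 0)) := by
        refine rRow_congr fun q => ?_
        rw [hx', Xsp.sub_val, hz]
        simp [hzf, hp]
      rw [hshape, rRow_neg, rRow_ind01 hθ1]
    · have hshape : rRow θ (x'.val p) = rRow θ (x₀.val p) := by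
        refine rRow_congr fun q => ?_
        rw [hx', Xsp.sub_val, hzsupp p hp q, sub_zero]
      rw [hshape]
      have := Xsp.rRow_le_norm x₀ p
      rwa [hx₀n] at this
  have hx'b0 : x'.val b 0 = -1 := by
    rw [hx', Xsp.sub_val, hz]
    simp [hzf]
  have hkey : 2 - 3 * ε ≤ (f i - g) x' := by
    have h1 : (f i - g) x' = f i x₀ - f i z + 1 := by
      rw [ContinuousLinearMap.sub_apply]
      have h2 : g x' = x'.val b 0 := rfl
      rw [h2, hx'b0, hx', map_sub]
      ring
    rw [h1]
    have h3 : -(2*ε) ≤ f i z := by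
      rcases abs_le.1 hfz with ⟨h4, _⟩
      linarith
    have h4 : f i z ≤ 2*ε := (abs_le.1 hfz).2
    linarith
  have hdist : 2 - 3 * ε ≤ dist g (f i) := by
    have h1 : |(f i - g) x'| ≤ ‖f i - g‖ := by
      have h2 := (f i - g).le_opNorm x'
      rw [Real.norm_eq_abs] at h2
      calc |(f i - g) x'| ≤ ‖f i - g‖ * ‖x'‖ := h2
        _ ≤ ‖f i - g‖ * 1 := by
            apply mul_le_mul_of_nonneg_left hx'norm (norm_nonneg _)
        _ = ‖f i - g‖ := mul_one _
    have h3 : (f i - g) x' ≤ |(f i - g) x'| := le_abs_self _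
    rw [dist_eq_norm, ← norm_sub_rev]
    linarith
  have : 2 - 3 * ε ≤ r := le_trans hdist hi
  rw [hεdef] at this
  linarith

lemma thickness_dual_Xsp (hθ1 : θ ≤ 1) :
    thickness (StrongDual ℝ (Xsp θ hθ)) = 2 := by
  unfold thickness
  have hmem : (0:ℝ) < 2 ∧ ∃ (n : ℕ) (c : Fin n → StrongDual ℝ (Xsp θ hθ)),
      (∀ i, ‖c i‖ = 1) ∧
      Metric.closedBall (0 : StrongDual ℝ (Xsp θ hθ)) 1 ⊆
        ⋃ i, Metric.closedBall (c i) 2 := by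
    refine ⟨two_pos, 1, fun _ => coordCLM θ hθ 0 0, fun _ => norm_coordCLM hθ1 0, ?_⟩
    intro h hh
    rw [Metric.mem_closedBall, dist_zero_right] at hh
    refine Set.mem_iUnion.2 ⟨0, ?_⟩
    rw [Metric.mem_closedBall, dist_eq_norm]
    calc ‖h - coordCLM θ hθ 0 0‖ ≤ ‖h‖ + ‖coordCLM θ hθ 0 0‖ := norm_sub_le _ _
      _ ≤ 1 + 1 := add_le_add hh (le_of_eq (norm_coordCLM hθ1 0))
      _ = 2 := by norm_num
  apply le_antisymm
  · exact csInf_le ⟨0, fun r hr => le_of_lt hr.1⟩ hmem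
  · refine le_csInf ⟨2, hmem⟩ ?_
    rintro r ⟨hr0, n, f, hf, hcov⟩
    exact dual_thickness_lower hθ1 r hr0 n f hf hcov

end Dual


/-! ### Infinite-dimensionality -/

section Infdim

variable {θ : ℝ} {hθ : 0 ≤ θ}

lemma uVec_linearIndependent : LinearIndependent ℝ (fun b : ℕ => uVec θ hθ b) := by
  rw [linearIndependent_iff']
  intro s g hsum i hi
  have h1 : (coordL θ hθ i 0) (∑ j ∈ s, g j • uVec θ hθ j) = 0 := by
    rw [hsum]; exact map_zero _
  rw [map_sum] at h1
  have h2 : ∀ j ∈ s, (coordL θ hθ i 0) (g j • uVec θ hθ j) = if j = i then g j else 0 := by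
    intro j _
    have h3 : (coordL θ hθ i 0) (g j • uVec θ hθ j) = g j * (uVec θ hθ j).val i 0 := rfl
    rw [h3]
    by_cases hij : j = i
    · subst hij
      rw [uVec_row_self]
      simp
    · rw [uVec_row_ne (fun hc => hij hc.symm)]
      simp [hij]
  rw [Finset.sum_congr rfl h2, Finset.sum_ite_eq' s i g] at h1
  simpa [hi] using h1

lemma not_finiteDimensional : ¬ FiniteDimensional ℝ (Xsp θ hθ) := by
  intro hfd
  set d := Module.finrank ℝ (Xsp θ hθ) with hd
  have hli : LinearIndependent ℝ
      ((fun b : ℕ => uVec θ hθ b) ∘ (fun j : Fin (d+1) => (j : ℕ))) :=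
    (uVec_linearIndependent).comp _ (fun a b hab => Fin.val_injective hab)
  have hcard := hli.fintype_card_le_finrank
  rw [Fintype.card_fin] at hcard
  omega

end Infdim

/-! ### Completeness -/

section Complete

variable {θ : ℝ} {hθ : 0 ≤ θ}

instance : CompleteSpace (Xsp θ hθ) := by
  apply Metric.complete_of_cauchySeq_tendsto
  intro u hu
  -- coordinatewise limits
  have hcoord : ∀ nk : ℕ × ℕ, ∃ l, Tendsto (fun m => (u m).val nk.1 nk.2) atTop (𝓝 l) := by
    rintro ⟨n, k⟩
    apply cauchySeq_tendsto_of_complete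
    rw [Metric.cauchySeq_iff] at hu ⊢
    intro ε hε
    obtain ⟨M, hM⟩ := hu ε hε
    refine ⟨M, fun a ha b hb => ?_⟩
    have h1 := hM a ha b hb
    rw [dist_eq_norm] at h1
    rw [Real.dist_eq]
    have h2 : (u a).val n k - (u b).val n k = (u a - u b).val n k := by
      rw [Xsp.sub_val]
    rw [h2]
    exact lt_of_le_of_lt (Xsp.abs_coord_le_norm _ n k) h1
  choose L hL using hcoord
  set Lf : ℕ → ℕ → ℝ := fun n k => L (n, k) with hLf
  have hLt : ∀ n k, Tendsto (fun m => (u m).val n k) atTop (𝓝 (Lf n k)) :=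
    fun n k => hL (n, k)
  -- uniform estimates
  have hkey : ∀ ε : ℝ, 0 < ε → ∃ M, ∀ m, M ≤ m → ∀ n,
      (∀ k, |(u m).val n k - Lf n k| ≤ ε) ∧
      (∀ J, ∑ k ∈ Finset.range J, θ * |(u m).val n k - Lf n k| ≤ ε) := by
    intro ε hε
    rw [Metric.cauchySeq_iff] at hu
    obtain ⟨M, hM⟩ := hu (ε/2) (by linarith)
    refine ⟨M, fun m hm n => ⟨fun k => ?_, fun J => ?_⟩⟩
    · have ht : Tendsto (fun m' => |(u m).val n k - (u m').val n k|) atTop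
          (𝓝 |(u m).val n k - Lf n k|) :=
        (tendsto_const_nhds.sub (hLt n k)).abs
      refine le_of_tendsto ht ?_
      filter_upwards [eventually_ge_atTop M] with m' hm'
      have h1 := hM m hm m' hm'
      rw [dist_eq_norm] at h1
      have h2 : (u m).val n k - (u m').val n k = (u m - u m').val n k := by
        rw [Xsp.sub_val]
      rw [h2]
      have := lt_of_le_of_lt (Xsp.abs_coord_le_norm (u m - u m') n k) h1
      linarith
    · have ht : Tendsto (fun m' => ∑ k ∈ Finset.range J, θ * |(u m).val n k - (u m').val n k|)
          atTop (𝓝 (∑ k ∈ Finset.range J, θ * |(u m).val n k - Lf n k|)) := by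
        apply tendsto_finset_sum
        intro k _
        exact ((tendsto_const_nhds.sub (hLt n k)).abs).const_mul θ
      refine le_of_tendsto ht ?_
      filter_upwards [eventually_ge_atTop M] with m' hm'
      have h1 := hM m hm m' hm'
      rw [dist_eq_norm] at h1
      have h2 : ∑ k ∈ Finset.range J, θ * |(u m).val n k - (u m').val n k|
          = ∑ k ∈ Finset.range J, θ * |(u m - u m').val n k| := by
        refine Finset.sum_congr rfl fun k _ => ?_
        rw [Xsp.sub_val]
      rw [h2]
      have h3 : ∑ k ∈ Finset.range J, θ * |(u m - u m').val n k|
          ≤ sRow θ ((u m - u m').val n) :=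
        Summable.sum_le_tsum _ (fun j _ => mul_nonneg hθ (abs_nonneg _)) ((u m - u m').mem.2.1 n)
      have h4 : sRow θ ((u m - u m').val n) ≤ ‖u m - u m'‖ :=
        le_trans (le_max_right _ _) (Xsp.rRow_le_norm _ n)
      linarith
  -- the limit lies in the space
  have hdiffsummable : ∀ (m : ℕ) (n : ℕ) (c : ℝ), 0 < c →
      (∀ J, ∑ k ∈ Finset.range J, θ * |(u m).val n k - Lf n k| ≤ c) →
      Summable (fun k => θ * |(u m).val n k - Lf n k|) := by
    intro m n c hc hb
    exact summable_of_sum_range_le (fun k => mul_nonneg hθ (abs_nonneg _)) hb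
  have hmem : MemX θ Lf := by
    obtain ⟨M1, hM1⟩ := hkey 1 one_pos
    refine ⟨fun n => ?_, fun n => ?_, ?_⟩
    · -- bounded rows
      obtain ⟨a, ha⟩ := (u M1).mem.1 n
      refine ⟨a + 1, ?_⟩
      rintro r ⟨k, rfl⟩
      have h1 : |Lf n k| ≤ |(u M1).val n k| + |(u M1).val n k - Lf n k| := by
        have h2 := abs_sub ((u M1).val n k) ((u M1).val n k - Lf n k)
        have h3 : (u M1).val n k - ((u M1).val n k - Lf n k) = Lf n k := by ring
        rw [h3] at h2
        exact h2
      have h3 := (hM1 M1 (le_refl _) n).1 k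
      have h4 : |(u M1).val n k| ≤ a := ha ⟨k, rfl⟩
      show |Lf n k| ≤ a + 1
      linarith
    · -- summable rows
      have hs1 := (u M1).mem.2.1 n
      have hs2 := hdiffsummable M1 n 1 one_pos (hM1 M1 (le_refl _) n).2
      refine Summable.of_nonneg_of_le (fun k => mul_nonneg hθ (abs_nonneg _))
        (fun k => ?_) (hs1.add hs2)
      have h1 : |Lf n k| ≤ |(u M1).val n k| + |(u M1).val n k - Lf n k| := by
        have h2 := abs_sub ((u M1).val n k) ((u M1).val n k - Lf n k)
        have h3 : (u M1).val n k - ((u M1).val n k - Lf n k) = Lf n k := by ring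
        rw [h3] at h2
        exact h2
      calc θ * |Lf n k| ≤ θ * (|(u M1).val n k| + |(u M1).val n k - Lf n k|) :=
            mul_le_mul_of_nonneg_left h1 hθ
        _ = θ * |(u M1).val n k| + θ * |(u M1).val n k - Lf n k| := by ring
    · -- rows tend to zero
      rw [Metric.tendsto_atTop]
      intro ε hε
      obtain ⟨M2, hM2⟩ := hkey (ε/3) (by linarith)
      -- rRow of the difference row is at most ε/3
      have hdrow : ∀ n, rRow θ (fun k => Lf n k - (u M2).val n k) ≤ ε/3 := by
        intro n
        refine rRow_le ?_ ?_
        · refine mRow_le fun k => ?_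
          have := (hM2 M2 (le_refl _) n).1 k
          rw [abs_sub_comm] at this
          exact this
        · have hsum2 := hdiffsummable M2 n (ε/3) (by linarith) (hM2 M2 (le_refl _) n).2
          have hsum2' : Summable (fun k => θ * |Lf n k - (u M2).val n k|) := by
            refine hsum2.congr fun k => ?_
            rw [abs_sub_comm]
          refine Summable.tsum_le_of_sum_range_le hsum2' fun J => ?_
          have h1 := (hM2 M2 (le_refl _) n).2 J
          refine le_trans (le_of_eq (Finset.sum_congr rfl fun k _ => ?_)) h1
          rw [abs_sub_comm]
      obtain ⟨N0, hN0⟩ := (Metric.tendsto_atTop.1 (u M2).mem.2.2) (ε/3) (by linarith)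
      refine ⟨N0, fun n hn => ?_⟩
      have h1 : rRow θ (Lf n) ≤ rRow θ ((u M2).val n) + ε/3 := by
        have h2 : rRow θ (Lf n)
            = rRow θ (fun k => (u M2).val n k + (Lf n k - (u M2).val n k)) := by
          refine rRow_congr fun k => ?_
          ring
        rw [h2]
        have hbd : BddAbove (Set.range fun k => |Lf n k - (u M2).val n k|) := by
          refine ⟨ε/3, ?_⟩
          rintro r ⟨k, rfl⟩
          show |Lf n k - (u M2).val n k| ≤ ε/3
          have := (hM2 M2 (le_refl _) n).1 k
          rw [abs_sub_comm] at this
          exact this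
        have hsm : Summable (fun k => θ * |Lf n k - (u M2).val n k|) := by
          have hsum2 := hdiffsummable M2 n (ε/3) (by linarith) (hM2 M2 (le_refl _) n).2
          refine hsum2.congr fun k => ?_
          rw [abs_sub_comm]
        refine le_trans (rRow_add_le hθ ((u M2).mem.1 n) hbd ((u M2).mem.2.1 n) hsm) ?_
        have := hdrow n
        linarith
      have h3 := hN0 n hn
      rw [Real.dist_eq, sub_zero, abs_of_nonneg (rRow_nonneg _)] at h3
      rw [Real.dist_eq, sub_zero, abs_of_nonneg (rRow_nonneg _)]
      linarith
  set xlim : Xsp θ hθ := ⟨Lf, hmem⟩ with hxlim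
  refine ⟨xlim, ?_⟩
  rw [Metric.tendsto_atTop]
  intro ε hε
  obtain ⟨M3, hM3⟩ := hkey (ε/2) (by linarith)
  refine ⟨M3, fun m hm => ?_⟩
  rw [dist_eq_norm]
  have h1 : ‖u m - xlim‖ ≤ ε/2 := by
    refine Xsp.norm_le fun n => ?_
    have h2 : rRow θ ((u m - xlim).val n)
        = rRow θ (fun k => (u m).val n k - Lf n k) := by
      refine rRow_congr fun k => ?_
      rw [Xsp.sub_val]
    rw [h2]
    refine rRow_le ?_ ?_
    · exact mRow_le fun k => (hM3 m hm n).1 k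
    · have hsum3 := hdiffsummable m n (ε/2) (by linarith) (hM3 m hm n).2
      exact Summable.tsum_le_of_sum_range_le hsum3 (hM3 m hm n).2
  linarith

end Complete

end TT

theorem exists_banach_thin_with_any_thickness (α : ℝ) (h1 : 1 ≤ α) (h2 : α ≤ 2) :
    ∃ (X : Type) (_ : NormedAddCommGroup X) (_ : NormedSpace ℝ X),
      CompleteSpace X ∧ ¬ FiniteDimensional ℝ X ∧
      thickness X = α ∧ thinness X = 1 ∧ thickness (StrongDual ℝ X) = 2 := by
  have hθ0 : 0 ≤ α - 1 := by linarith
  have hθ1 : α - 1 ≤ 1 := by linarith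
  refine ⟨TT.Xsp (α - 1) hθ0, inferInstance, inferInstance, inferInstance,
    TT.not_finiteDimensional, ?_, TT.thinness_Xsp hθ1, TT.thickness_dual_Xsp hθ1⟩
  rw [TT.thickness_Xsp hθ1]
  ring
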